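/- arXiv:1005.0270 — 4 statements merged into one kernel-verified Lean document; each statement's English description precedes it below -/
import Mathlib

section
/- Locality of 2-cocycles (Lemma 4.1): Let ω be a 2-cocycle on the Lie algebra 𝒮(ℝ, L). If ξ, η ∈ 𝒮(ℝ, L) have compact supports and their closed supports are disjoint (tsupport ξ ∩ tsupport η = ∅), then ω(ξ, η) = 0. -/
open SchwartzMap Complex Filter
open scoped FourierTransform ComplexInnerProductSpace

/-- Every Schwartz function has temperate growth. -/
theorem SchwartzMap.hasTemperateGrowth' {D F : Type*} [NormedAddCommGroup D] [NormedSpace ℝ D]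
    [NormedAddCommGroup F] [NormedSpace ℝ F] (f : 𝓢(D, F)) :
    Function.HasTemperateGrowth ⇑f := by
  refine ⟨f.smooth', fun n => ?_⟩
  obtain ⟨C, _, hC⟩ := f.decay 0 n
  exact ⟨0, C, fun x => by simpa using hC x⟩

/-- A complex Lie algebra structure (complex-bilinear skew bracket satisfying the Jacobi
identity) on a complex normed space `L`. -/
structure LieBracket (L : Type*) [NormedAddCommGroup L] [NormedSpace ℂ L] where
  br : L →ₗ[ℂ] L →ₗ[ℂ] L
  skew : ∀ x y, br x y = - br y x
  jacobi : ∀ x y z, br (br x y) z + br (br y z) x + br (br z x) y = 0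

variable {L : Type*} [NormedAddCommGroup L] [NormedSpace ℂ L] [FiniteDimensional ℂ L]

/-- Simplicity of a Lie algebra: non-abelian and without nontrivial ideals. -/
def LieBracket.IsSimple (B : LieBracket L) : Prop :=
  (∃ x y, B.br x y ≠ 0) ∧
    ∀ I : Submodule ℂ L, (∀ x : L, ∀ y ∈ I, B.br x y ∈ I) → I = ⊥ ∨ I = ⊤

/-- The Killing form `κ(x,y) = tr (ad x ∘ ad y)` of the Lie algebra `(L, B)`. -/
noncomputable def LieBracket.killing (B : LieBracket L) (x y : L) : ℂ :=
  LinearMap.trace ℂ L ((B.br x).comp (B.br y))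

/-- The bracket as a continuous real-bilinear map. -/
noncomputable def LieBracket.clm (B : LieBracket L) : L →L[ℝ] L →L[ℝ] L :=
  LinearMap.toContinuousLinearMap
  { toFun := fun x => LinearMap.toContinuousLinearMap ((B.br x).restrictScalars ℝ)
    map_add' := fun x y => by ext z; simp
    map_smul' := fun r x => by
      ext z
      simp only [RingHom.id_apply, ContinuousLinearMap.coe_smul', Pi.smul_apply,
        LinearMap.coe_toContinuousLinearMap', LinearMap.coe_restrictScalars]
      rw [← algebraMap_smul ℂ r x, _root_.map_smul]
      simp [algebraMap_smul] }

@[simp] lemma LieBracket.clm_apply (B : LieBracket L) (x y : L) : B.clm x y = B.br x y := rfl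

/-- The pointwise Lie bracket on the Schwartz space `𝓢(ℝ, L)`:
`(sbracket ξ η) t = [ξ t, η t]`. -/
noncomputable def LieBracket.sbracket (B : LieBracket L) (ξ η : 𝓢(ℝ, L)) : 𝓢(ℝ, L) :=
  SchwartzMap.bilinLeftCLM B.clm η.hasTemperateGrowth' ξ

@[simp] lemma LieBracket.sbracket_apply (B : LieBracket L) (ξ η : 𝓢(ℝ, L)) (t : ℝ) :
    B.sbracket ξ η t = B.br (ξ t) (η t) := rfl


section AuxLocality

open scoped ContDiff

/-- Construct a Schwartz map from a smooth compactly supported function. -/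
noncomputable def SchwartzMap.ofCS {F : Type*} [NormedAddCommGroup F] [NormedSpace ℝ F]
    (f : ℝ → F) (hs : ContDiff ℝ ∞ f) (hc : HasCompactSupport f) : 𝓢(ℝ, F) where
  toFun := f
  smooth' := hs
  decay' := by
    intro k m
    have h1 : Continuous fun x : ℝ => ‖x‖ ^ k * ‖iteratedFDeriv ℝ m f x‖ :=
      (continuous_norm.pow k).mul (hs.continuous_iteratedFDeriv (by exact_mod_cast le_top)).norm
    have h2 : HasCompactSupport fun x : ℝ => ‖x‖ ^ k * ‖iteratedFDeriv ℝ m f x‖ :=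
      ((hc.iteratedFDeriv m).norm).mul_left
    obtain ⟨C, hC⟩ := h1.bounded_above_of_compact_support h2
    exact ⟨C, fun x => le_trans (le_abs_self _) ((Real.norm_eq_abs _) ▸ hC x)⟩

@[simp] lemma SchwartzMap.ofCS_apply {F : Type*} [NormedAddCommGroup F] [NormedSpace ℝ F]
    (f : ℝ → F) (hs : ContDiff ℝ ∞ f) (hc : HasCompactSupport f) (t : ℝ) :
    SchwartzMap.ofCS f hs hc t = f t := rfl

variable {L : Type*} [NormedAddCommGroup L] [NormedSpace ℂ L] [FiniteDimensional ℂ L]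

/-- Postcomposition of a Schwartz map with a linear map on a finite-dimensional space. -/
noncomputable def SchwartzMap.postcomp (P : L →ₗ[ℂ] L) (f : 𝓢(ℝ, L)) : 𝓢(ℝ, L) :=
  SchwartzMap.bilinLeftCLM
    (((ContinuousLinearMap.smulRightL ℝ ℝ L) (ContinuousLinearMap.id ℝ ℝ)).comp
      (LinearMap.toContinuousLinearMap (P.restrictScalars ℝ)))
    (Function.HasTemperateGrowth.const (1 : ℝ)) f

@[simp] lemma SchwartzMap.postcomp_apply (P : L →ₗ[ℂ] L) (f : 𝓢(ℝ, L)) (t : ℝ) :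
    SchwartzMap.postcomp P f t = P (f t) := by
  show ((ContinuousLinearMap.id ℝ ℝ) (1 : ℝ)) • (P (f t)) = P (f t)
  simp

/-- In a simple Lie algebra the identity can be written as a finite sum of maps
`v ↦ [aᵢ, Pᵢ v]`. -/
lemma LieBracket.exists_decomp (B : LieBracket L) (hB : B.IsSimple) :
    ∃ (ι : Type) (_ : Fintype ι) (a : ι → L) (P : ι → (L →ₗ[ℂ] L)),
      ∀ v : L, ∑ i, B.br (a i) (P i v) = v := by
  classical
  set S : Set L := Set.range fun p : L × L => B.br p.1 p.2 with hS
  have hideal : ∀ x : L, ∀ y ∈ Submodule.span ℂ S, B.br x y ∈ Submodule.span ℂ S := by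
    intro x y hy
    induction hy using Submodule.span_induction with
    | mem z hz =>
        obtain ⟨⟨u, w⟩, rfl⟩ := hz
        have hY : B.br (B.br u w) x = -(B.br (B.br x u) w + B.br (B.br w x) u) := by
          have h := B.jacobi x u w
          rwa [add_comm (B.br (B.br x u) w), add_assoc, add_eq_zero_iff_eq_neg] at h
        have hx : B.br x (B.br u w) = B.br (B.br x u) w + B.br (B.br w x) u := by
          rw [B.skew, hY, neg_neg]
        rw [hx]
        exact Submodule.add_mem _ (Submodule.subset_span ⟨(B.br x u, w), rfl⟩)
          (Submodule.subset_span ⟨(B.br w x, u), rfl⟩)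
    | zero => simp
    | add a b _ _ ha hb => rw [map_add]; exact Submodule.add_mem _ ha hb
    | smul c a _ ha => rw [map_smul]; exact Submodule.smul_mem _ _ ha
  have hspan : Submodule.span ℂ S = ⊤ := by
    rcases hB.2 (Submodule.span ℂ S) hideal with h | h
    · obtain ⟨x, y, hxy⟩ := hB.1
      have : B.br x y ∈ (⊥ : Submodule ℂ L) := h ▸ Submodule.subset_span ⟨(x, y), rfl⟩
      exact absurd (by simpa using this) hxy
    · exact h
  set b := Module.finBasis ℂ L with hb
  have hrep : ∀ j, ∃ (n : ℕ) (c : Fin n → ℂ) (xy : Fin n → L × L),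
      ∑ i, c i • B.br (xy i).1 (xy i).2 = b j := by
    intro j
    have hmem : (b j) ∈ Submodule.span ℂ S := hspan ▸ Submodule.mem_top
    obtain ⟨n, f, g, hg⟩ := Submodule.mem_span_set'.mp hmem
    choose p hp using fun i => (g i).2
    exact ⟨n, f, p, by simp only [hp]; exact hg⟩
  choose n c xy h using hrep
  refine ⟨(j : Fin (Module.finrank ℂ L)) × Fin (n j), inferInstance,
    fun q => (xy q.1 q.2).1,
    fun q => LinearMap.smulRight (c q.1 q.2 • b.coord q.1) ((xy q.1 q.2).2), ?_⟩
  intro v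
  rw [← Finset.univ_sigma_univ, Finset.sum_sigma]
  have key : ∀ j, ∑ i : Fin (n j),
      B.br (xy j i).1 (((c j i • b.coord j) v) • (xy j i).2) = b.repr v j • b j := by
    intro j
    rw [← h j, Finset.smul_sum]
    refine Finset.sum_congr rfl fun i _ => ?_
    rw [map_smul]
    simp only [LinearMap.smul_apply, Module.Basis.coord_apply, smul_smul, smul_eq_mul]
    rw [mul_comm]
  calc ∑ j, ∑ i : Fin (n j),
        B.br (xy j i).1 ((LinearMap.smulRight (c j i • b.coord j) ((xy j i).2)) v)
      = ∑ j, b.repr v j • b j := by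
        refine Finset.sum_congr rfl fun j _ => ?_
        simp only [LinearMap.smulRight_apply]
        exact key j
    _ = v := b.sum_repr v

end AuxLocality

/-- **Lemma 4.1** (locality of 2-cocycles): any 2-cocycle `ω` on `𝒮(ℝ, L)` vanishes on pairs
of compactly supported elements with disjoint (closed) supports. -/
theorem cocycle_isLocal (B : LieBracket L) (hB : B.IsSimple)
    (ω : 𝓢(ℝ, L) →ₗ[ℂ] 𝓢(ℝ, L) →ₗ[ℂ] ℂ)
    (hskew : ∀ ξ η, ω ξ η = - ω η ξ)
    (hjacobi : ∀ ξ η ζ,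
      ω (B.sbracket ξ η) ζ + ω (B.sbracket η ζ) ξ + ω (B.sbracket ζ ξ) η = 0)
    (ξ η : 𝓢(ℝ, L)) (hcξ : HasCompactSupport ⇑ξ) (hcη : HasCompactSupport ⇑η)
    (hdisj : tsupport ⇑ξ ∩ tsupport ⇑η = ∅) :
    ω ξ η = 0 := by
  classical
  obtain ⟨ι, hι, a, P, hsum⟩ := B.exists_decomp hB
  letI := hι
  -- a smooth cutoff which is 1 on the support of ξ and 0 on the support of η
  obtain ⟨r, hr⟩ := hcξ.isCompact.isBounded.subset_closedBall 0
  set s : Set ℝ := tsupport ⇑η ∪ (Metric.ball (0 : ℝ) (r + 1))ᶜ with hs_def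
  have hs_closed : IsClosed s := (isClosed_tsupport _).union Metric.isOpen_ball.isClosed_compl
  have hd : Disjoint s (tsupport ⇑ξ) := by
    refine Set.disjoint_union_left.mpr ⟨?_, ?_⟩
    · rw [Set.disjoint_iff_inter_eq_empty, Set.inter_comm]; exact hdisj
    · refine Set.disjoint_left.mpr fun x hx hx' => hx ?_
      exact Metric.closedBall_subset_ball (lt_add_one r) (hr hx')
  obtain ⟨χ, hχ0, hχ1, -⟩ :=
    exists_contMDiffMap_zero_one_of_isClosed (n := ⊤) (modelWithCornersSelf ℝ ℝ) hs_closed (isClosed_tsupport ⇑ξ) hd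
  have hχsm : ContDiff ℝ ((⊤ : ℕ∞) : WithTop ℕ∞) ⇑χ := χ.contMDiff.contDiff
  have hχcs : HasCompactSupport ⇑χ := by
    refine HasCompactSupport.intro (isCompact_closedBall (0 : ℝ) (r + 1)) fun x hx => ?_
    exact hχ0 (Or.inr fun hxb => hx (Metric.ball_subset_closedBall hxb))
  -- the factors
  set α : ι → 𝓢(ℝ, L) := fun i =>
    SchwartzMap.ofCS (fun t => SMul.smul (χ t) (a i))
      (hχsm.smul contDiff_const)
      (by
        refine HasCompactSupport.intro (isCompact_closedBall (0 : ℝ) (r + 1)) fun x hx => ?_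
        have hx0 : χ x = 0 := hχ0 (Or.inr fun hxb => hx (Metric.ball_subset_closedBall hxb))
        show SMul.smul (χ x) (a i) = 0
        rw [hx0]
        exact zero_smul ℝ (a i)) with hα
  set ζ : ι → 𝓢(ℝ, L) := fun i => SchwartzMap.postcomp (P i) ξ with hζ
  have hη0 : ∀ t, t ∈ tsupport ⇑ξ → η t = 0 := by
    intro t ht
    by_contra hne
    exact Set.eq_empty_iff_forall_notMem.mp hdisj t ⟨ht, subset_closure hne⟩
  -- the three bracket computations
  have h1 : ∀ i, B.sbracket (ζ i) η = 0 := by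
    intro i
    ext t
    simp only [LieBracket.sbracket_apply, hζ, SchwartzMap.postcomp_apply,
      SchwartzMap.zero_apply]
    by_cases hξt : ξ t = 0
    · simp [hξt]
    · rw [hη0 t (subset_closure hξt)]; simp
  have h2 : ∀ i, B.sbracket η (α i) = 0 := by
    intro i
    ext t
    simp only [LieBracket.sbracket_apply, hα, SchwartzMap.ofCS_apply, SchwartzMap.zero_apply]
    by_cases hηt : η t = 0
    · simp [hηt]
    · have h0 : χ t = 0 := hχ0 (Or.inl (subset_closure hηt))
      have : (SMul.smul (χ t) (a i) : L) = 0 := by rw [h0]; exact zero_smul ℝ (a i)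
      rw [this, map_zero]
  have h3 : (∑ i, B.sbracket (α i) (ζ i)) = ξ := by
    ext t
    have hcoe : (∑ i, B.sbracket (α i) (ζ i)) t = ∑ i, B.sbracket (α i) (ζ i) t := by
      have := map_sum (FunLike.coeAddMonoidHom 𝓢(ℝ, L) ℝ L) (fun i => B.sbracket (α i) (ζ i)) Finset.univ
      rw [FunLike.coe_coeAddMonoidHom] at this
      rw [this, Finset.sum_apply]
    rw [hcoe]
    have hterm : ∀ i, B.sbracket (α i) (ζ i) t
        = ((χ t : ℂ)) • B.br (a i) (P i (ξ t)) := by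
      intro i
      simp only [LieBracket.sbracket_apply, hα, hζ, SchwartzMap.ofCS_apply,
        SchwartzMap.postcomp_apply]
      have hsm : (SMul.smul (χ t) (a i) : L) = ((χ t : ℂ)) • a i := by
        exact (algebraMap_smul ℂ (χ t) (a i)).symm
      rw [hsm, map_smul, LinearMap.smul_apply]
    rw [Finset.sum_congr rfl fun i _ => hterm i, ← Finset.smul_sum, hsum]
    by_cases hξt : ξ t = 0
    · simp [hξt]
    · rw [hχ1 (subset_closure hξt)]; simp
  -- conclude via the cocycle identity
  have hterm0 : ∀ i, ω (B.sbracket (α i) (ζ i)) η = 0 := by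
    intro i
    have hj := hjacobi (α i) (ζ i) η
    rw [h1 i, h2 i] at hj
    simpa using hj
  calc ω ξ η = ω (∑ i, B.sbracket (α i) (ζ i)) η := by rw [h3]
    _ = ∑ i, ω (B.sbracket (α i) (ζ i)) η := by rw [map_sum, LinearMap.coe_sum, Finset.sum_apply]
    _ = 0 := by simp [hterm0]
end

section
/- Locality of Jacobi bilinear forms on Schwartz functions (claim proved inside Theorem 4.3): Let γ : 𝒮(ℝ, ℂ) × 𝒮(ℝ, ℂ) → ℂ be a bilinear map satisfying γ(fg, h) + γ(gh, f) + γ(hf, g) = 0 for all f, g, h ∈ 𝒮(ℝ, ℂ), where fg denotes the pointwise product. If f and g have compact supports and their closed supports are disjoint, then γ(f, g) = 0. -/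
open SchwartzMap Complex Filter
open scoped FourierTransform ComplexInnerProductSpace

/-- The pointwise product on `𝓢(ℝ, ℂ)`. -/
noncomputable def mulS (f g : 𝓢(ℝ, ℂ)) : 𝓢(ℝ, ℂ) :=
  SchwartzMap.bilinLeftCLM (ContinuousLinearMap.mul ℝ ℂ) g.hasTemperateGrowth' f

@[simp] lemma mulS_apply (f g : 𝓢(ℝ, ℂ)) (t : ℝ) : mulS f g t = f t * g t := rfl

open scoped ContDiff in
/-- A smooth compactly supported function is a Schwartz function. -/
noncomputable def SchwartzMap.ofCompactSupport (φ : ℝ → ℂ) (hφ : ContDiff ℝ ∞ φ)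
    (hc : HasCompactSupport φ) : 𝓢(ℝ, ℂ) where
  toFun := φ
  smooth' := hφ
  decay' := by
    intro k n
    have h1 : HasCompactSupport (iteratedFDeriv ℝ n φ) := hc.iteratedFDeriv n
    have h2 : HasCompactSupport fun x : ℝ => ‖x‖ ^ k * ‖iteratedFDeriv ℝ n φ x‖ := by
      apply HasCompactSupport.mul_left
      exact h1.norm
    have h3 : Continuous fun x : ℝ => ‖x‖ ^ k * ‖iteratedFDeriv ℝ n φ x‖ :=
      ((continuous_norm.pow k)).mul
        ((hφ.continuous_iteratedFDeriv (by exact_mod_cast le_top)).norm)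
    obtain ⟨C, hC⟩ := h3.bounded_above_of_compact_support h2
    exact ⟨C, fun x => (Real.le_norm_self _).trans (hC x)⟩

open scoped Manifold ContDiff in
/-- **Locality of Jacobi bilinear forms** (claim inside Theorem 4.3): a bilinear form `γ` on
`𝒮(ℝ, ℂ)` satisfying `γ(fg,h) + γ(gh,f) + γ(hf,g) = 0` vanishes on pairs of compactly
supported functions with disjoint (closed) supports. -/
theorem jacobi_form_isLocal (γ : 𝓢(ℝ, ℂ) →ₗ[ℂ] 𝓢(ℝ, ℂ) →ₗ[ℂ] ℂ)
    (hjacobi : ∀ f g h : 𝓢(ℝ, ℂ), γ (mulS f g) h + γ (mulS g h) f + γ (mulS h f) g = 0)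
    (f g : 𝓢(ℝ, ℂ)) (hcf : HasCompactSupport ⇑f) (hcg : HasCompactSupport ⇑g)
    (hdisj : tsupport ⇑f ∩ tsupport ⇑g = ∅) :
    γ f g = 0 := by
  classical
  have hdisj' : Disjoint (tsupport ⇑f) (tsupport ⇑g) :=
    Set.disjoint_iff_inter_eq_empty.mpr hdisj
  -- a smooth function ψ : ℝ → ℝ, 0 on tsupport g, 1 on tsupport f
  obtain ⟨ψ, hψ0, hψ1, hψI⟩ :=
    exists_contMDiffMap_zero_one_of_isClosed (𝓘(ℝ, ℝ)) (isClosed_tsupport ⇑g)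
      (isClosed_tsupport ⇑f) hdisj'.symm
  have hψsmooth : ContDiff ℝ ∞ ⇑ψ := contMDiff_iff_contDiff.mp ψ.contMDiff
  -- a radius R with tsupport f ⊆ closedBall 0 R
  obtain ⟨R, hR⟩ := (hcf.isCompact.isBounded).subset_closedBall 0
  -- the bump function θ, equal to 1 on closedBall 0 (|R|+1)
  set θ : ContDiffBump (0 : ℝ) :=
    ⟨|R| + 1, |R| + 2, by positivity, by linarith⟩ with hθdef
  -- the cutoff φ₀ = θ * ψ : ℝ → ℝ
  set φ₀ : ℝ → ℝ := fun x => θ x * ψ x with hφ₀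
  have hφ₀smooth : ContDiff ℝ ∞ φ₀ := θ.contDiff.mul hψsmooth
  have hφ₀c : HasCompactSupport φ₀ := θ.hasCompactSupport.mul_right
  have hφ₀f : ∀ x ∈ tsupport ⇑f, φ₀ x = 1 := by
    intro x hx
    have hx1 : x ∈ Metric.closedBall (0 : ℝ) (|R| + 1) := by
      have := hR hx
      simp only [Metric.mem_closedBall] at this ⊢
      calc dist x 0 ≤ R := this
        _ ≤ |R| + 1 := by have := le_abs_self R; linarith
    have : θ x = 1 := θ.one_of_mem_closedBall hx1
    simp [hφ₀, this, hψ1 hx]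
  have hφ₀g : ∀ x ∈ tsupport ⇑g, φ₀ x = 0 := by
    intro x hx
    simp [hφ₀, hψ0 hx]
  -- the complex-valued Schwartz cutoff
  have hφcsmooth : ContDiff ℝ ∞ fun x => (φ₀ x : ℂ) :=
    Complex.ofRealCLM.contDiff.comp hφ₀smooth
  have hφcc : HasCompactSupport fun x => (φ₀ x : ℂ) :=
    hφ₀c.comp_left (g := fun r : ℝ => (r : ℂ)) (by simp)
  set φ : 𝓢(ℝ, ℂ) := SchwartzMap.ofCompactSupport (fun x => (φ₀ x : ℂ)) hφcsmooth hφcc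
    with hφdef
  have hφ_apply : ∀ x, φ x = (φ₀ x : ℂ) := fun x => rfl
  -- key multiplicative identities
  have h1 : mulS φ f = f := by
    ext x
    rw [mulS_apply, hφ_apply]
    by_cases hx : f x = 0
    · simp [hx]
    · have : x ∈ tsupport ⇑f := subset_closure (by simpa using hx)
      rw [hφ₀f x this]; simp
  have h2 : mulS f g = 0 := by
    ext x
    rw [mulS_apply]
    by_cases hx : f x = 0
    · simp [hx]
    · have hxf : x ∈ tsupport ⇑f := subset_closure (by simpa using hx)
      have hxg : x ∉ tsupport ⇑g := fun h =>
        Set.eq_empty_iff_forall_notMem.mp hdisj x ⟨hxf, h⟩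
      have : g x = 0 := image_eq_zero_of_notMem_tsupport hxg
      simp [this]
  have h3 : mulS g φ = 0 := by
    ext x
    rw [mulS_apply, hφ_apply]
    by_cases hx : g x = 0
    · simp [hx]
    · have hxg : x ∈ tsupport ⇑g := subset_closure (by simpa using hx)
      rw [hφ₀g x hxg]; simp
  -- apply the Jacobi identity to (φ, f, g)
  have := hjacobi φ f g
  rw [h1, h2, h3] at this
  simpa using this
end

section
/- Lemma 5.5 (smooth convergence of commutators): Let (ξ_n) be a sequence in 𝒮(ℝ, L) such that: (i) the Fourier transforms ξ̂_n all have support contained in a fixed compact set; (ii) there is M > 0 with ‖ξ̂_n(p)‖ ≤ M for all n and all p ∈ ℝ; (iii) ξ̂_n converges pointwise to a bounded function; and (iv) the Lebesgue measure of the support of ξ̂_m − ξ̂_n tends to 0 as min(m,n) → ∞. Then for every η ∈ 𝒮(ℝ, L), the sequence of brackets [ξ_n, η] converges in the Schwartz topology to an element of 𝒮(ℝ, L). -/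
open SchwartzMap Complex Filter
open scoped FourierTransform ComplexInnerProductSpace

section Aux

open MeasureTheory
open scoped Real

variable {E : Type*} [NormedAddCommGroup E]

lemma integrable_of_bdd_supp {g : ℝ → E} (hm : AEStronglyMeasurable g volume) {c : ℝ}
    (hbd : ∀ p, ‖g p‖ ≤ c) {K : Set ℝ} (hK : IsCompact K)
    (hsupp : Function.support g ⊆ K) : Integrable g := by
  refine Integrable.mono' (g := K.indicator fun _ => c)
    ((integrable_indicator_iff hK.measurableSet).2
      (integrableOn_const hK.measure_lt_top.ne)) hm
    (Filter.Eventually.of_forall fun p => ?_)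
  by_cases hp : p ∈ K
  · simpa [Set.indicator_of_mem hp] using hbd p
  · have : g p = 0 := Function.notMem_support.1 fun h => hp (hsupp h)
    simp [this, Set.indicator_of_notMem hp]

variable {V : Type*} [NormedAddCommGroup V] [NormedSpace ℂ V]

lemma key_bound {g : ℝ → V} (hm : AEStronglyMeasurable g volume) {c R : ℝ}
    (hc : 0 ≤ c) (hR : 0 ≤ R) (hbd : ∀ p, ‖g p‖ ≤ c)
    (hsupp : Function.support g ⊆ Metric.closedBall 0 R) (i : ℕ) (t : ℝ) :
    ‖iteratedDeriv i (fun s => 𝓕 g (-s)) t‖ ≤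
      (2 * π * R) ^ i * c * (volume (Function.support g)).toReal := by
  have habs : ∀ p ∈ Function.support g, |p| ≤ R := fun p hp => by
    have h0 := hsupp hp; rw [Metric.mem_closedBall, Real.dist_0_eq_abs] at h0; exact h0
  have hint : ∀ n : ℕ, Integrable (fun x : ℝ => x ^ n • g x) := by
    intro n
    refine integrable_of_bdd_supp
      ((continuous_pow n).aestronglyMeasurable.smul hm) (c := R ^ n * c)
      (fun p => ?_) (isCompact_closedBall 0 R)
      ((Function.support_smul_subset_right _ _).trans hsupp)
    by_cases hp : g p = 0
    · simp [hp]; positivity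
    · have hpR : |p| ≤ R := habs p hp
      rw [norm_smul, norm_pow, Real.norm_eq_abs]
      exact mul_le_mul (pow_le_pow_left₀ (abs_nonneg p) hpR n) (hbd p) (norm_nonneg _)
        (by positivity)
  have hderiv : iteratedDeriv i (𝓕 g) =
      𝓕 (fun x : ℝ => (-2 * π * I * x) ^ i • g x) :=
    Real.iteratedDeriv_fourier (N := (i : ℕ∞)) (fun n _ => hint n) le_rfl
  rw [iteratedDeriv_comp_neg, norm_smul, hderiv]
  have h1 : ‖((-1 : ℝ)) ^ i‖ = 1 := by simp
  rw [h1, one_mul]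
  set h : ℝ → V := fun x : ℝ => (-2 * π * I * x) ^ i • g x with hh
  set s : Set ℝ := toMeasurable volume (Function.support g) with hs
  have hsmeas : MeasurableSet s := measurableSet_toMeasurable _ _
  have hsub : Function.support g ⊆ s := subset_toMeasurable _ _
  have hvols : volume s = volume (Function.support g) := measure_toMeasurable _
  have hsfin : volume s < ⊤ := by
    rw [hvols]
    exact lt_of_le_of_lt (measure_mono hsupp) (measure_closedBall_lt_top)
  have hptbd : ∀ x : ℝ, ‖h x‖ ≤ s.indicator (fun _ => (2 * π * R) ^ i * c) x := by
    intro x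
    by_cases hx : g x = 0
    · simp [hh, hx]
      exact Set.indicator_nonneg (fun _ _ => by positivity) x
    · have hxs : x ∈ s := hsub hx
      rw [Set.indicator_of_mem hxs, hh]
      have : ‖(-2 * π * I * (x : ℂ)) ^ i • g x‖ = ‖(-2 * π * I * (x : ℂ))‖ ^ i * ‖g x‖ := by
        rw [norm_smul, norm_pow]
      rw [this]
      have hnx : ‖(-2 * π * I * (x : ℂ))‖ = 2 * π * |x| := by
        rw [norm_mul, norm_mul, norm_mul]
        norm_num [Complex.norm_real, Complex.norm_I, Real.norm_eq_abs,
          _root_.abs_of_nonneg Real.pi_pos.le]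
      rw [hnx]
      have hxx := habs x hx
      have h2 : (2 * π * |x|) ^ i ≤ (2 * π * R) ^ i := by
        apply pow_le_pow_left₀ (by positivity)
        have : (0:ℝ) < π := Real.pi_pos
        nlinarith [abs_nonneg x]
      exact mul_le_mul h2 (hbd x) (norm_nonneg _) (by positivity)
  calc ‖𝓕 h (-t)‖ ≤ ∫ x, ‖h x‖ :=
        VectorFourier.norm_fourierIntegral_le_integral_norm _ _ _ _ _
    _ ≤ ∫ x, s.indicator (fun _ => (2 * π * R) ^ i * c) x := by
        refine integral_mono_of_nonneg (Filter.Eventually.of_forall fun x => norm_nonneg _)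
          ?_ (Filter.Eventually.of_forall hptbd)
        rw [integrable_indicator_iff hsmeas]
        exact integrableOn_const hsfin.ne
    _ = (volume s).toReal • ((2 * π * R) ^ i * c) := integral_indicator_const _ hsmeas
    _ = (2 * π * R) ^ i * c * (volume (Function.support g)).toReal := by
        rw [hvols, smul_eq_mul]; ring

lemma fourier_sub {f h : ℝ → V} (hf : Integrable f) (hh : Integrable h) (w : ℝ) :
    𝓕 (fun p => f p - h p) w = 𝓕 f w - 𝓕 h w := by
  have hc : Continuous fun p : ℝ × ℝ => (innerₗ ℝ) p.1 p.2 := by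
    simpa using (continuous_inner : Continuous fun p : ℝ × ℝ => (inner ℝ p.1 p.2 : ℝ))
  have h1 := (VectorFourier.fourierIntegral_convergent_iff (E := V)
      Real.continuous_fourierChar hc w).2 hf
  have h2 := (VectorFourier.fourierIntegral_convergent_iff (E := V)
      Real.continuous_fourierChar hc w).2 hh
  show VectorFourier.fourierIntegral 𝐞 volume (innerₗ ℝ) (fun p => f p - h p) w = _
  unfold VectorFourier.fourierIntegral
  simp only [smul_sub]
  exact integral_sub h1 h2

end Aux

variable {L : Type*} [NormedAddCommGroup L] [NormedSpace ℂ L] [FiniteDimensional ℂ L]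

open MeasureTheory in
open scoped Real in
/-- **Lemma 5.5** (smooth convergence of commutators). -/
theorem commutator_tendsto (B : LieBracket L) (hB : B.IsSimple)
    (ξ : ℕ → 𝓢(ℝ, L)) (K : Set ℝ) (hK : IsCompact K)
    (hsupp : ∀ n, Function.support (𝓕 ⇑(ξ n)) ⊆ K)
    (M : ℝ) (hM : 0 < M) (hbd : ∀ (n : ℕ) (p : ℝ), ‖𝓕 ⇑(ξ n) p‖ ≤ M)
    (φ : ℝ → L) (C : ℝ) (hφbd : ∀ p, ‖φ p‖ ≤ C)
    (hconv : ∀ p, Tendsto (fun n => 𝓕 ⇑(ξ n) p) atTop (nhds (φ p)))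
    (hmeas : ∀ ε : ENNReal, 0 < ε → ∃ N : ℕ, ∀ m n : ℕ, N ≤ m → N ≤ n →
      MeasureTheory.volume (Function.support fun p => 𝓕 ⇑(ξ m) p - 𝓕 ⇑(ξ n) p) < ε)
    (η : 𝓢(ℝ, L)) :
    ∃ ζ : 𝓢(ℝ, L), Tendsto (fun n => B.sbracket (ξ n) η) atTop (nhds ζ) := by
  haveI : CompleteSpace L := FiniteDimensional.complete ℂ L
  have hC0 : 0 ≤ C := le_trans (norm_nonneg _) (hφbd 0)
  -- a closed ball containing K
  obtain ⟨r, hr⟩ := hK.isBounded.subset_closedBall 0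
  set R : ℝ := max r 0 with hRdef
  have hR : 0 ≤ R := le_max_right _ _
  have hKR : K ⊆ Metric.closedBall 0 R :=
    hr.trans (Metric.closedBall_subset_closedBall (le_max_left _ _))
  -- continuity and integrability of the Fourier transforms
  have hFcont : ∀ n, Continuous (𝓕 ⇑(ξ n)) := fun n => by
    rw [← SchwartzMap.fourier_coe, ← SchwartzMap.fourierTransformCLM_apply ℂ (ξ n)]
    exact (SchwartzMap.fourierTransformCLM ℂ (ξ n)).continuous
  have hFint : ∀ n, Integrable (𝓕 ⇑(ξ n)) := fun n => by
    rw [← SchwartzMap.fourier_coe, ← SchwartzMap.fourierTransformCLM_apply ℂ (ξ n)]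
    exact (SchwartzMap.fourierTransformCLM ℂ (ξ n)).integrable
  -- properties of φ
  have hφm : AEStronglyMeasurable φ volume :=
    aestronglyMeasurable_of_tendsto_ae (μ := volume) atTop
      (fun n => (hFcont n).aestronglyMeasurable) (Filter.Eventually.of_forall hconv)
  have hφsupp : Function.support φ ⊆ K := by
    intro p hp
    by_contra hpK
    have hz : ∀ n : ℕ, 𝓕 ⇑(ξ n) p = 0 := fun n =>
      Function.notMem_support.1 fun h => hpK (hsupp n h)
    have : φ p = 0 := by
      refine tendsto_nhds_unique (hconv p) ?_
      simpa [hz] using (tendsto_const_nhds : Tendsto (fun _ : ℕ => (0 : L)) atTop (nhds 0))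
    exact hp this
  have hφint : Integrable φ := integrable_of_bdd_supp hφm hφbd hK hφsupp
  -- the function ψ = inverse Fourier transform of φ
  set ψ : ℝ → L := fun t => 𝓕 φ (-t) with hψdef
  have hψsmooth : ContDiff ℝ ((⊤ : ℕ∞) : WithTop ℕ∞) ψ := by
    have h1 : ContDiff ℝ ((⊤ : ℕ∞) : WithTop ℕ∞) (𝓕 φ) := by
      refine Real.contDiff_fourier (fun n _ => ?_)
      refine integrable_of_bdd_supp (c := R ^ n * C)
        (((continuous_norm.pow n).aestronglyMeasurable).mul hφm.norm) (fun p => ?_) hK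
        ((Function.support_mul_subset_right _ _).trans
          ((Function.support_comp_subset (by simp) φ).trans hφsupp))
      by_cases hp : φ p = 0
      · simp [hp]; positivity
      · have hpR : |p| ≤ R := by
          have := hKR (hφsupp hp)
          rwa [Metric.mem_closedBall, Real.dist_0_eq_abs] at this
        have : ‖p‖ ^ n ≤ R ^ n := by
          rw [Real.norm_eq_abs]; exact pow_le_pow_left₀ (abs_nonneg p) hpR n
        calc ‖‖p‖ ^ n * ‖φ p‖‖ = ‖p‖ ^ n * ‖φ p‖ := by
              rw [Real.norm_eq_abs, _root_.abs_of_nonneg (by positivity)]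
          _ ≤ R ^ n * C := mul_le_mul this (hφbd p) (norm_nonneg _) (by positivity)
    exact h1.comp contDiff_neg
  have hψbd : ∀ i t, ‖iteratedDeriv i ψ t‖ ≤
      (2 * π * R) ^ i * C * (volume (Function.support φ)).toReal := fun i t =>
    key_bound hφm hC0 hR hφbd (hφsupp.trans hKR) i t
  have hψtg : Function.HasTemperateGrowth ψ := by
    refine ⟨hψsmooth, fun n => ⟨0, (2 * π * R) ^ n * C * (volume (Function.support φ)).toReal,
      fun x => ?_⟩⟩
    rw [norm_iteratedFDeriv_eq_norm_iteratedDeriv]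
    simpa using hψbd n x
  -- the candidate limit
  set ζ : 𝓢(ℝ, L) := SchwartzMap.bilinLeftCLM B.clm.flip hψtg η with hζdef
  have hζapp : ∀ t, ζ t = B.clm (ψ t) (η t) := fun t => rfl
  refine ⟨ζ, ?_⟩
  -- difference functions
  set g : ℕ → ℝ → L := fun n p => 𝓕 ⇑(ξ n) p - φ p with hgdef
  have hgm : ∀ n, AEStronglyMeasurable (g n) volume := fun n =>
    (hFcont n).aestronglyMeasurable.sub hφm
  have hgbd : ∀ n p, ‖g n p‖ ≤ M + C := fun n p =>
    (norm_sub_le _ _).trans (add_le_add (hbd n p) (hφbd p))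
  have hgsupp : ∀ n, Function.support (g n) ⊆ K := fun n => by
    intro p hp
    by_cases h1 : p ∈ Function.support (𝓕 ⇑(ξ n))
    · exact hsupp n h1
    · have h2 : 𝓕 ⇑(ξ n) p = 0 := Function.notMem_support.1 h1
      have : φ p ≠ 0 := by
        intro h3
        exact hp (by simp [hgdef, h2, h3])
      exact hφsupp this
  -- the difference of brackets is controlled by `g n`
  have hδeq : ∀ n : ℕ, (fun t => ξ n t - ψ t) = fun s => 𝓕 (g n) (-s) := by
    intro n
    funext t
    have hinv : 𝓕⁻ (𝓕 ⇑(ξ n)) = ⇑(ξ n) :=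
      (ξ n).continuous.fourierInv_fourier_eq (ξ n).integrable (hFint n)
    have : 𝓕 (g n) (-t) = 𝓕 (𝓕 ⇑(ξ n)) (-t) - 𝓕 φ (-t) :=
      fourier_sub (hFint n) hφint (-t)
    rw [this, ← Real.fourierInv_eq_fourier_neg, hinv]
  -- volume control
  set Svol : ℕ → ENNReal := fun n => volume (Function.support (g n)) with hSvoldef
  have hVtend : Tendsto Svol atTop (nhds 0) := by
    rw [ENNReal.tendsto_atTop_zero]
    intro ε hε
    obtain ⟨N, hN⟩ := hmeas ε hε
    refine ⟨N, fun n hn => ?_⟩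
    have hsub : Function.support (g n) ⊆
        ⋃ m : ℕ, ⋂ j ∈ Set.Ici m, Function.support fun p => 𝓕 ⇑(ξ j) p - 𝓕 ⇑(ξ n) p := by
      intro p hp
      have hne : φ p ≠ 𝓕 ⇑(ξ n) p := by
        intro h
        exact hp (by simp [hgdef, h])
      have : ∀ᶠ j in atTop, 𝓕 ⇑(ξ j) p ≠ 𝓕 ⇑(ξ n) p :=
        (hconv p).eventually (isOpen_compl_singleton.eventually_mem hne)
      obtain ⟨m, hm⟩ := eventually_atTop.1 this
      refine Set.mem_iUnion.2 ⟨m, ?_⟩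
      refine Set.mem_biInter fun j hj => ?_
      simpa [Function.mem_support, sub_ne_zero] using hm j hj
    have hdir : Directed (· ⊆ ·) fun m : ℕ =>
        ⋂ j ∈ Set.Ici m, Function.support fun p => 𝓕 ⇑(ξ j) p - 𝓕 ⇑(ξ n) p := by
      refine (Monotone.directed_le fun a b hab => ?_)
      exact Set.biInter_subset_biInter_left (Set.Ici_subset_Ici.2 hab)
    calc Svol n ≤ volume (⋃ m : ℕ, ⋂ j ∈ Set.Ici m,
          Function.support fun p => 𝓕 ⇑(ξ j) p - 𝓕 ⇑(ξ n) p) := measure_mono hsub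
      _ = ⨆ m : ℕ, volume (⋂ j ∈ Set.Ici m,
          Function.support fun p => 𝓕 ⇑(ξ j) p - 𝓕 ⇑(ξ n) p) := hdir.measure_iUnion
      _ ≤ ε := by
          refine iSup_le fun m => ?_
          refine le_trans (measure_mono (Set.biInter_subset_of_mem
            (show max m N ∈ Set.Ici m from Set.mem_Ici.2 (le_max_left _ _)))) ?_
          exact (hN (max m N) n (le_max_right _ _) hn).le
  have hVr : Tendsto (fun n => (Svol n).toReal) atTop (nhds 0) := by
    have := (ENNReal.tendsto_toReal (by simp : (0 : ENNReal) ≠ ⊤)).comp hVtend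
    exact this
  -- seminorm estimates
  rw [(schwartz_withSeminorms ℝ ℝ L).tendsto_nhds]
  rintro ⟨k, l⟩ ε hε
  set Cst : ℝ := ∑ i ∈ Finset.range (l + 1), ‖B.clm‖ * ((l.choose i : ℝ) *
    ((2 * π * R) ^ i * (M + C)) * SchwartzMap.seminorm ℝ k (l - i) η) with hCstdef
  have hCst0 : 0 ≤ Cst := by
    refine Finset.sum_nonneg fun i _ => ?_
    have := apply_nonneg (SchwartzMap.seminorm (E := ℝ) (F := L) ℝ k (l - i)) η
    positivity
  have hbound : ∀ n, SchwartzMap.seminorm ℝ k l (B.sbracket (ξ n) η - ζ) ≤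
      Cst * (Svol n).toReal := by
    intro n
    have hVn0 : 0 ≤ (Svol n).toReal := ENNReal.toReal_nonneg
    refine SchwartzMap.seminorm_le_bound ℝ k l _ (by positivity) fun x => ?_
    have hfun : ⇑(B.sbracket (ξ n) η - ζ) = fun t => B.clm (ξ n t - ψ t) (η t) := by
      funext t
      simp only [SchwartzMap.sub_apply, LieBracket.sbracket_apply, hζapp]
      simp [map_sub]
    have hδcd : ContDiff ℝ ((⊤ : ℕ∞) : WithTop ℕ∞) (fun t => ξ n t - ψ t) := (ξ n).smooth'.sub hψsmooth
    have hδbd : ∀ i x', ‖iteratedFDeriv ℝ i (fun t => ξ n t - ψ t) x'‖ ≤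
        (2 * π * R) ^ i * (M + C) * (Svol n).toReal := by
      intro i x'
      rw [norm_iteratedFDeriv_eq_norm_iteratedDeriv, hδeq n]
      exact key_bound (hgm n) (by positivity) hR (hgbd n)
        ((hgsupp n).trans hKR) i x'
    rw [hfun]
    calc ‖x‖ ^ k * ‖iteratedFDeriv ℝ l (fun t => B.clm (ξ n t - ψ t) (η t)) x‖
        ≤ ‖x‖ ^ k * (‖B.clm‖ * ∑ i ∈ Finset.range (l + 1), (l.choose i : ℝ) *
            ‖iteratedFDeriv ℝ i (fun t => ξ n t - ψ t) x‖ *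
            ‖iteratedFDeriv ℝ (l - i) (⇑η) x‖) := by
          refine mul_le_mul_of_nonneg_left ?_ (by positivity)
          exact B.clm.norm_iteratedFDeriv_le_of_bilinear hδcd η.smooth' x (n := l) (by exact_mod_cast le_top)
      _ = ∑ i ∈ Finset.range (l + 1), ‖B.clm‖ * ((l.choose i : ℝ) *
            ‖iteratedFDeriv ℝ i (fun t => ξ n t - ψ t) x‖ *
            (‖x‖ ^ k * ‖iteratedFDeriv ℝ (l - i) (⇑η) x‖)) := by
          rw [Finset.mul_sum, Finset.mul_sum]
          exact Finset.sum_congr rfl fun i _ => by ring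
      _ ≤ ∑ i ∈ Finset.range (l + 1), ‖B.clm‖ * ((l.choose i : ℝ) *
            ((2 * π * R) ^ i * (M + C) * (Svol n).toReal) *
            SchwartzMap.seminorm ℝ k (l - i) η) := by
          refine Finset.sum_le_sum fun i _ => ?_
          refine mul_le_mul_of_nonneg_left ?_ (by positivity)
          refine mul_le_mul ?_ (SchwartzMap.le_seminorm ℝ k (l - i) η x) (by positivity) ?_
          · exact mul_le_mul_of_nonneg_left (hδbd i x) (by positivity)
          · positivity
      _ = Cst * (Svol n).toReal := by
          rw [hCstdef, Finset.sum_mul]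
          exact Finset.sum_congr rfl fun i _ => by ring
  -- conclusion
  have htend : Tendsto (fun n => Cst * (Svol n).toReal) atTop (nhds 0) := by
    simpa using hVr.const_mul Cst
  have hev : ∀ᶠ n in atTop, Cst * (Svol n).toReal < ε := htend.eventually (gt_mem_nhds hε)
  refine hev.mono fun n hn => ?_
  exact lt_of_le_of_lt (hbound n) hn
end

section
/- Schwartz convergence of truncated Fourier series (claim proved inside Lemma 5.2): Let S > 0, let u ∈ 𝒮(ℝ, ℂ) be smooth with compact support contained in the open interval (−S/2, S/2), and let g ∈ C^∞(ℝ, ℂ) have compact support contained in [−S/2, S/2] with g(p) = 1 for all p in the support of u. Define the Fourier coefficients g_k := (1/S) ∫_{−S/2}^{S/2} g(p) e^{−2πikp/S} dp for k ∈ ℤ. Then the partial sums Σ_{|k| ≤ N} g_k · (p ↦ e^{2πikp/S} u(p)) converge to u in the Schwartz topology of 𝒮(ℝ, ℂ) as N → ∞. -/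
open SchwartzMap Complex Filter
open scoped ContDiff Real

section Aux

lemma my_liftIoc_eq_liftIco {p : ℝ} [hp : Fact (0 < p)] (a : ℝ) (f : ℝ → ℂ)
    (h : f a = f (a + p)) : AddCircle.liftIoc p a f = AddCircle.liftIco p a f := by
  funext x
  set y := AddCircle.equivIoc p a x with hy
  have hmem : (y : ℝ) ∈ Set.Ioc a (a + p) := y.2
  have hxy : ((y : ℝ) : AddCircle p) = x := by
    have := (AddCircle.equivIoc p a).symm_apply_apply x
    rw [← hy] at this
    exact this
  rw [← hxy]
  rcases eq_or_lt_of_le hmem.2 with heq | hlt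
  · rw [heq, AddCircle.liftIoc_coe_apply (by simpa [heq] using hmem), ← h]
    have : ((a + p : ℝ) : AddCircle p) = ((a : ℝ) : AddCircle p) := AddCircle.coe_add_period p a
    rw [this, AddCircle.liftIco_coe_apply (Set.left_mem_Ico.2 (by linarith [hp.out]))]
  · rw [AddCircle.liftIoc_coe_apply hmem, AddCircle.liftIco_coe_apply ⟨hmem.1.le, hlt⟩]

lemma my_hasDerivAt_cexp_mul (z : ℂ) (x : ℝ) :
    HasDerivAt (fun p : ℝ => Complex.exp (z * p)) (z * Complex.exp (z * x)) x := by
  have h : HasDerivAt (fun w : ℂ => Complex.exp (z * w)) (Complex.exp (z * x) * (z * 1)) (x : ℂ) :=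
    ((hasDerivAt_id (x : ℂ)).const_mul z).cexp
  simpa [mul_comm] using h.comp_ofReal

lemma my_contDiff_cexp_mul (z : ℂ) : ContDiff ℝ ∞ (fun p : ℝ => Complex.exp (z * p)) :=
  Complex.contDiff_exp.comp (contDiff_const.mul Complex.ofRealCLM.contDiff)

lemma my_iteratedDeriv_cexp_mul (z : ℂ) (j : ℕ) :
    iteratedDeriv j (fun p : ℝ => Complex.exp (z * p))
      = fun p : ℝ => z ^ j * Complex.exp (z * p) := by
  induction j with
  | zero => simp
  | succ j ih =>
    rw [iteratedDeriv_succ, ih]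
    funext x
    have h : HasDerivAt (fun p : ℝ => z ^ j * Complex.exp (z * p))
        (z ^ j * (z * Complex.exp (z * x))) x := (my_hasDerivAt_cexp_mul z x).const_mul _
    rw [h.deriv]; ring

lemma my_schwartz_sum_apply {ι : Type*} (s : Finset ι) (f : ι → 𝓢(ℝ, ℂ)) (x : ℝ) :
    (∑ k ∈ s, f k) x = ∑ k ∈ s, f k x := by
  change (FunLike.coeAddMonoidHom _ _ _) (∑ k ∈ s, f k) x = _
  rw [map_sum]
  simp [SchwartzMap.coeHom]

lemma my_div_cancel {w v : ℂ} (hw : w ≠ 0) (hv : v ≠ 0) (x : ℂ) :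
    w / v * (v / w * x) = x := by
  have h1 : w / v * (v / w) = 1 := by
    rw [div_mul_div_comm, mul_comm w v, div_self (mul_ne_zero hv hw)]
  rw [← mul_assoc, h1, one_mul]

end Aux

set_option maxHeartbeats 1000000 in
/-- **Schwartz convergence of truncated Fourier series** (claim inside Lemma 5.2): if `u` is
smooth with compact support in `(-S/2, S/2)` and `g` is smooth, supported in `[-S/2, S/2]`
and equal to `1` on the support of `u`, then the partial sums of the Fourier series of `g`
multiplied into `u` converge to `u` in the Schwartz topology. -/
theorem fourier_series_tendsto_schwartz (S : ℝ) (hS : 0 < S) (u : 𝓢(ℝ, ℂ))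
    (hu : tsupport ⇑u ⊆ Set.Ioo (-(S / 2)) (S / 2))
    (g : ℝ → ℂ) (hg : ContDiff ℝ ∞ g) (hgsupp : tsupport g ⊆ Set.Icc (-(S / 2)) (S / 2))
    (hg1 : ∀ p ∈ tsupport ⇑u, g p = 1)
    (e : ℤ → 𝓢(ℝ, ℂ))
    (he : ∀ (k : ℤ) (p : ℝ),
      e k p = Complex.exp (2 * (Real.pi : ℂ) * Complex.I * (k : ℂ) * (p : ℂ) / (S : ℂ)) * u p) :
    Tendsto
      (fun N : ℕ => ∑ k ∈ Finset.Icc (-(N : ℤ)) (N : ℤ),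
        ((1 / (S : ℂ)) * ∫ p in (-(S / 2))..(S / 2),
            g p * Complex.exp (-(2 * (Real.pi : ℂ) * Complex.I * (k : ℂ) * (p : ℂ) / (S : ℂ)))) • e k)
      atTop (nhds u) := by
  haveI : Fact (0 < S) := ⟨hS⟩
  have hab : -(S / 2) < -(S / 2) + S := by linarith
  -- iterated derivatives of g
  set gj : ℕ → ℝ → ℂ := fun j => deriv^[j] g with hgj_def
  have hgj_succ : ∀ j, gj (j + 1) = deriv (gj j) := fun j =>
    Function.iterate_succ_apply' deriv j g
  have hgj_smooth : ∀ j, ContDiff ℝ ∞ (gj j) := fun j => hg.iterate_deriv j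
  have hgj_tsupp : ∀ j, tsupport (gj j) ⊆ Set.Icc (-(S / 2)) (S / 2) := by
    intro j; induction j with
    | zero => exact hgsupp
    | succ j ih =>
      refine subset_trans ?_ ih
      rw [hgj_succ]
      exact closure_minimal support_deriv_subset isClosed_closure
  have hgj_zero : ∀ j, ∀ x : ℝ, x ∉ Set.Ioo (-(S / 2)) (S / 2) → gj j x = 0 := by
    intro j x hx
    have h1 : Set.EqOn (gj j) 0 (Set.Icc (-(S / 2)) (S / 2))ᶜ := fun y hy =>
      image_eq_zero_of_notMem_tsupport (fun hmem => hy (hgj_tsupp j hmem))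
    have h2 : Set.EqOn (gj j) 0 (closure (Set.Icc (-(S / 2)) (S / 2))ᶜ) :=
      h1.closure (hgj_smooth j).continuous continuous_const
    have hx' : x ∈ closure (Set.Icc (-(S / 2)) (S / 2))ᶜ := by
      rw [closure_compl, interior_Icc]; exact hx
    exact h2 hx'
  have hgj_zero_a : ∀ j, gj j (-(S / 2)) = 0 := fun j =>
    hgj_zero j _ (by intro h; exact lt_irrefl _ h.1)
  have hgj_zero_b : ∀ j, gj j (-(S / 2) + S) = 0 := fun j =>
    hgj_zero j _ (by intro h; have := h.2; linarith)
  -- lifts to the circle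
  set Fj : ℕ → AddCircle S → ℂ := fun j => AddCircle.liftIoc S (-(S / 2)) (gj j) with hFj_def
  have hFj_Ico : ∀ j, Fj j = AddCircle.liftIco S (-(S / 2)) (gj j) := fun j =>
    my_liftIoc_eq_liftIco _ (gj j) (by rw [hgj_zero_a, hgj_zero_b])
  have hFj_cont : ∀ j, Continuous (Fj j) := by
    intro j
    rw [hFj_Ico]
    exact AddCircle.liftIco_continuous (by rw [hgj_zero_a, hgj_zero_b])
      (hgj_smooth j).continuous.continuousOn
  set CC : ℕ → C(AddCircle S, ℂ) := fun j => ⟨Fj j, hFj_cont j⟩ with hCC_def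
  set c : ℕ → ℤ → ℂ := fun j k => fourierCoeff (Fj j) k with hc_def
  have hcoeOn : ∀ j k, c j k = fourierCoeffOn hab (gj j) k := by
    intro j k
    exact fourierCoeff_liftIoc_eq (gj j) k
  -- recurrence for the coefficients
  have hc_rec : ∀ (j : ℕ) (k : ℤ),
      c (j + 1) k = (2 * (π : ℂ) * I * k / S) * c j k := by
    intro j k
    rcases eq_or_ne k 0 with rfl | hk
    · -- k = 0 : both sides vanish
      rw [hcoeOn, fourierCoeffOn_eq_integral]
      have hint : (∫ x in (-(S / 2))..(-(S / 2) + S), gj (j + 1) x) =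
          gj j (-(S / 2) + S) - gj j (-(S / 2)) := by
        rw [hgj_succ]
        exact intervalIntegral.integral_deriv_eq_sub
          (fun x _ => ((hgj_smooth j).differentiable (by simp)).differentiableAt)
          (((hgj_smooth (j + 1)).continuous.intervalIntegrable _ _).congr
            (by rw [hgj_succ]; exact fun _ _ => rfl))
      simp only [neg_zero, fourier_zero, one_smul]
      rw [hint, hgj_zero_a, hgj_zero_b]
      simp
    · have hder : ∀ x ∈ Set.uIcc (-(S / 2)) (-(S / 2) + S),
          HasDerivAt (gj j) (gj (j + 1) x) x := by
        intro x _
        rw [hgj_succ]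
        exact (((hgj_smooth j).differentiable (by simp)).differentiableAt).hasDerivAt
      have hint : IntervalIntegrable (gj (j + 1)) MeasureTheory.volume
          (-(S / 2)) (-(S / 2) + S) := (hgj_smooth (j + 1)).continuous.intervalIntegrable _ _
      have h := fourierCoeffOn_of_hasDerivAt hab hk hder hint
      rw [← hcoeOn, ← hcoeOn, hgj_zero_a, hgj_zero_b] at h
      have hS' : (S : ℂ) ≠ 0 := Complex.ofReal_ne_zero.mpr hS.ne'
      have hk' : (k : ℂ) ≠ 0 := Int.cast_ne_zero.mpr hk
      have hπ : (π : ℂ) ≠ 0 := Complex.ofReal_ne_zero.mpr Real.pi_ne_zero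
      have hX : ((-(S / 2) + S : ℝ) : ℂ) - ((-(S / 2) : ℝ) : ℂ) = (S : ℂ) := by
        push_cast; ring
      have hI : (Complex.I : ℂ) ≠ 0 := Complex.I_ne_zero
      have hw : (2 : ℂ) * ↑π * I * ↑k ≠ 0 :=
        mul_ne_zero (mul_ne_zero (mul_ne_zero two_ne_zero hπ) hI) hk'
      rw [h, hX]
      simp only [sub_self, mul_zero, zero_sub]
      have e1 : (1 : ℂ) / (-2 * ↑π * I * ↑k) * -(↑S * c (j + 1) k)
          = ↑S / (2 * ↑π * I * ↑k) * c (j + 1) k := by ring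
      rw [e1, my_div_cancel hw hS']
  -- boundedness of coefficients
  have hc_bound : ∀ j k, ‖c j k‖ ≤ ‖CC j‖ := by
    intro j k
    have : c j k = ∫ t : AddCircle S, fourier (-k) t • Fj j t ∂AddCircle.haarAddCircle := rfl
    rw [this]
    calc ‖∫ t : AddCircle S, fourier (-k) t • Fj j t ∂AddCircle.haarAddCircle‖
        ≤ ‖CC j‖ * (AddCircle.haarAddCircle Set.univ).toReal := by
          apply MeasureTheory.norm_integral_le_of_norm_le_const
          filter_upwards with t
          rw [norm_smul]
          calc ‖(fourier (-k)) t‖ * ‖Fj j t‖ ≤ 1 * ‖Fj j t‖ := by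
                gcongr
                calc ‖(fourier (-k)) t‖ ≤ ‖fourier (-k) (T := S)‖ :=
                      ContinuousMap.norm_coe_le_norm _ t
                _ = 1 := fourier_norm _
          _ = ‖Fj j t‖ := one_mul _
          _ ≤ ‖CC j‖ := ContinuousMap.norm_coe_le_norm (CC j) t
    _ = ‖CC j‖ := by simp
  -- summability
  have hc_summable : ∀ j, Summable (c j) := by
    intro j
    have hgrow : ∀ k : ℤ, k ≠ 0 →
        ‖c j k‖ ≤ (S / (2 * π)) ^ 2 * ‖CC (j + 2)‖ * (1 / (k : ℝ) ^ 2) := by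
      intro k hk
      have h2 : c (j + 2) k = (2 * (π : ℂ) * I * k / S) ^ 2 * c j k := by
        rw [hc_rec (j + 1) k, hc_rec j k]; ring
      have hk' : (k : ℂ) ≠ 0 := Int.cast_ne_zero.mpr hk
      have hS' : (S : ℂ) ≠ 0 := Complex.ofReal_ne_zero.mpr hS.ne'
      have hπ : (π : ℂ) ≠ 0 := Complex.ofReal_ne_zero.mpr Real.pi_ne_zero
      have hI : (Complex.I : ℂ) ≠ 0 := Complex.I_ne_zero
      have hw : (2 : ℂ) * ↑π * I * ↑k ≠ 0 :=
        mul_ne_zero (mul_ne_zero (mul_ne_zero two_ne_zero hπ) hI) hk'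
      have h3 : c j k = (S / (2 * (π : ℂ) * I * k)) ^ 2 * c (j + 2) k := by
        rw [h2, ← mul_assoc]
        have hcoef1 : ((S : ℂ) / (2 * (π : ℂ) * I * k)) ^ 2 * (2 * (π : ℂ) * I * ↑k / ↑S) ^ 2
            = 1 := by
          rw [div_pow, div_pow, div_mul_div_comm,
            mul_comm ((2 * (π : ℂ) * I * (k : ℂ)) ^ 2) ((S : ℂ) ^ 2), div_self
            (mul_ne_zero (pow_ne_zero 2 hS') (pow_ne_zero 2 hw))]
        rw [hcoef1, one_mul]
      have hnorm : ‖(S / (2 * (π : ℂ) * I * (k : ℂ))) ^ 2‖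
          = (S / (2 * π)) ^ 2 * (1 / (k : ℝ) ^ 2) := by
        rw [norm_pow, norm_div]
        rw [show ‖(S : ℂ)‖ = S by rw [Complex.norm_real, Real.norm_eq_abs, abs_of_pos hS]]
        rw [show ‖2 * (π : ℂ) * I * (k : ℂ)‖ = 2 * π * |(k : ℝ)| by
          rw [norm_mul, norm_mul, norm_mul, Complex.norm_I]
          simp [Real.norm_eq_abs, abs_of_pos Real.pi_pos]]
        rw [div_pow, mul_pow, mul_pow, _root_.sq_abs]
        ring
      calc ‖c j k‖ = ‖(S / (2 * (π : ℂ) * I * (k : ℂ))) ^ 2‖ * ‖c (j + 2) k‖ := by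
            rw [h3, norm_mul]
        _ = (S / (2 * π)) ^ 2 * (1 / (k : ℝ) ^ 2) * ‖c (j + 2) k‖ := by rw [hnorm]
        _ ≤ (S / (2 * π)) ^ 2 * (1 / (k : ℝ) ^ 2) * ‖CC (j + 2)‖ := by
            have hge : (0:ℝ) ≤ (S / (2 * π)) ^ 2 * (1 / (k : ℝ) ^ 2) := by positivity
            exact mul_le_mul_of_nonneg_left (hc_bound (j+2) k) hge
        _ = (S / (2 * π)) ^ 2 * ‖CC (j + 2)‖ * (1 / (k : ℝ) ^ 2) := by ring
    apply Summable.of_norm_bounded_eventually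
      (g := fun k : ℤ => (S / (2 * π)) ^ 2 * ‖CC (j + 2)‖ * (1 / (k : ℝ) ^ 2))
      (((Real.summable_one_div_int_pow).mpr one_lt_two).mul_left _)
    have : {k : ℤ | ¬ ‖c j k‖ ≤ (S / (2 * π)) ^ 2 * ‖CC (j + 2)‖ * (1 / (k : ℝ) ^ 2)} ⊆ {0} := by
      intro k hk
      by_contra hk0
      exact hk (hgrow k (by simpa using hk0))
    exact Set.Finite.subset (Set.finite_singleton 0) this
  -- Fourier series converges uniformly
  have hHasSum : ∀ j, HasSum (fun k => c j k • fourier k) (CC j) := fun j =>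
    hasSum_fourier_series_of_summable (f := CC j) (hc_summable j)
  have hIcc : Tendsto (fun N : ℕ => Finset.Icc (-(N : ℤ)) (N : ℤ)) atTop atTop := by
    apply tendsto_atTop_finset_of_monotone
    · intro M N h
      exact Finset.Icc_subset_Icc (by exact_mod_cast neg_le_neg (Int.ofNat_le.2 h))
        (by exact_mod_cast h)
    · intro x
      refine ⟨x.natAbs, ?_⟩
      simp only [Finset.mem_Icc]
      omega
  have htendC : ∀ j, Tendsto
      (fun N : ℕ => ‖(∑ k ∈ Finset.Icc (-(N : ℤ)) (N : ℤ), c j k • fourier k) - CC j‖)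
      atTop (nhds 0) := fun j =>
    tendsto_iff_norm_sub_tendsto_zero.mp ((hHasSum j).comp hIcc)
  -- pointwise bound on the relevant interval
  have hpoint : ∀ (j : ℕ) (N : ℕ) (p : ℝ), p ∈ Set.Ioc (-(S / 2)) (-(S / 2) + S) →
      ‖(∑ k ∈ Finset.Icc (-(N : ℤ)) (N : ℤ),
          c j k * Complex.exp ((2 * (π : ℂ) * I * k / S) * p)) - gj j p‖ ≤
        ‖(∑ k ∈ Finset.Icc (-(N : ℤ)) (N : ℤ), c j k • fourier k) - CC j‖ := by
    intro j N p hp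
    have h1 := ContinuousMap.norm_coe_le_norm
      ((∑ k ∈ Finset.Icc (-(N : ℤ)) (N : ℤ), c j k • fourier k) - CC j) ((p : ℝ) : AddCircle S)
    have h2 : (((∑ k ∈ Finset.Icc (-(N : ℤ)) (N : ℤ), c j k • fourier k) - CC j :
          C(AddCircle S, ℂ))) ((p : ℝ) : AddCircle S) =
        (∑ k ∈ Finset.Icc (-(N : ℤ)) (N : ℤ),
          c j k * Complex.exp ((2 * (π : ℂ) * I * k / S) * p)) - gj j p := by
      rw [ContinuousMap.sub_apply, ContinuousMap.sum_apply]
      congr 1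
      · refine Finset.sum_congr rfl fun k _ => ?_
        rw [ContinuousMap.smul_apply, smul_eq_mul, fourier_coe_apply]
        congr 1
        push_cast
        ring_nf
      · exact AddCircle.liftIoc_coe_apply hp
    rw [h2] at h1
    exact h1
  -- identify the coefficients in the statement
  have hcoef : ∀ k : ℤ,
      ((1 / (S : ℂ)) * ∫ p in (-(S / 2))..(S / 2),
        g p * Complex.exp (-(2 * (Real.pi : ℂ) * Complex.I * (k : ℂ) * (p : ℂ) / (S : ℂ))))
        = c 0 k := by
    intro k
    rw [hcoeOn 0 k, fourierCoeffOn_eq_integral]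
    have hbb : -(S / 2) + S = S / 2 := by ring
    rw [hbb]
    have hSS : S / 2 - -(S / 2) = S := by ring
    rw [hSS]
    have hInt : (∫ p in (-(S / 2))..(S / 2),
        g p * Complex.exp (-(2 * (Real.pi : ℂ) * Complex.I * (k : ℂ) * (p : ℂ) / (S : ℂ))))
        = ∫ x in (-(S / 2))..(S / 2), (fourier (-k) ((x : ℝ) : AddCircle S)) • gj 0 x := by
      apply intervalIntegral.integral_congr
      intro x _
      simp only [fourier_coe_apply, smul_eq_mul]
      have hg0 : gj 0 x = g x := rfl
      rw [hg0, mul_comm]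
      congr 1
      push_cast
      ring_nf
    rw [← hInt, real_smul]
    push_cast
    ring
  -- basic facts about `u`
  have hup : ∀ p : ℝ, u p = g p * u p := by
    intro p
    by_cases hp : p ∈ tsupport ⇑u
    · rw [hg1 p hp, one_mul]
    · rw [image_eq_zero_of_notMem_tsupport hp, mul_zero]
  have hK : tsupport ⇑u ⊆ Set.Ioc (-(S / 2)) (-(S / 2) + S) := fun x hx =>
    ⟨(hu hx).1, by linarith [(hu hx).2]⟩
  -- pass to seminorms
  rw [(schwartz_withSeminorms ℝ ℝ ℂ).tendsto_nhds]
  rintro ⟨m, n⟩ ε hε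
  set EN : ℕ → ℝ := fun N => ∑ j ∈ Finset.range (n + 1),
    ‖(∑ k ∈ Finset.Icc (-(N : ℤ)) (N : ℤ), c j k • fourier k) - CC j‖ with hEN_def
  have hEN_nonneg : ∀ N, 0 ≤ EN N := fun N =>
    Finset.sum_nonneg fun j _ => norm_nonneg _
  have hEN_tend : Tendsto EN atTop (nhds 0) := by
    have h := tendsto_finset_sum (Finset.range (n + 1)) (fun j (_ : j ∈ Finset.range (n + 1)) =>
      htendC j)
    simpa using h
  set DU : ℝ := ∑ j ∈ Finset.range (n + 1), SchwartzMap.seminorm ℝ 0 j u with hDU_def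
  have hDU_nonneg : 0 ≤ DU := Finset.sum_nonneg fun j _ => apply_nonneg _ _
  set Cst : ℝ := (S / 2 + 1) ^ m * (2 ^ n * DU) with hCst_def
  have hCst_nonneg : 0 ≤ Cst := by positivity
  have hinfty : (n : WithTop ℕ∞) ≤ ∞ := by exact_mod_cast le_top
  -- the key seminorm bound
  have key : ∀ N : ℕ, SchwartzMap.seminorm ℝ m n
      ((∑ k ∈ Finset.Icc (-(N : ℤ)) (N : ℤ),
        ((1 / (S : ℂ)) * ∫ p in (-(S / 2))..(S / 2),
            g p * Complex.exp (-(2 * (Real.pi : ℂ) * Complex.I * (k : ℂ) * (p : ℂ) / (S : ℂ)))) • e k)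
        - u) ≤ Cst * EN N := by
    intro N
    set φ : ℝ → ℂ := fun p =>
      (∑ k ∈ Finset.Icc (-(N : ℤ)) (N : ℤ),
        c 0 k * Complex.exp ((2 * (π : ℂ) * I * k / S) * p)) - g p with hφ_def
    have hφ_smooth : ContDiff ℝ ∞ φ :=
      (ContDiff.sum fun k _ => contDiff_const.mul (my_contDiff_cexp_mul _)).sub hg
    have hφ_iter : ∀ j : ℕ, iteratedDeriv j φ = fun p : ℝ =>
        (∑ k ∈ Finset.Icc (-(N : ℤ)) (N : ℤ),
          c j k * Complex.exp ((2 * (π : ℂ) * I * k / S) * p)) - gj j p := by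
      intro j
      induction j with
      | zero => rw [iteratedDeriv_zero]; rfl
      | succ j ih =>
        rw [iteratedDeriv_succ, ih]
        funext p
        have hsum_d : HasDerivAt (fun q : ℝ => ∑ k ∈ Finset.Icc (-(N : ℤ)) (N : ℤ),
            c j k * Complex.exp ((2 * (π : ℂ) * I * k / S) * q))
            (∑ k ∈ Finset.Icc (-(N : ℤ)) (N : ℤ),
              c j k * ((2 * (π : ℂ) * I * k / S) * Complex.exp ((2 * (π : ℂ) * I * k / S) * p)))
            p := HasDerivAt.fun_sum fun k _ => ((my_hasDerivAt_cexp_mul _ p).const_mul _)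
        have hg_d : HasDerivAt (gj j) (gj (j + 1) p) p := by
          rw [hgj_succ]
          exact ((hgj_smooth j).differentiable
            (by simp)).differentiableAt.hasDerivAt
        rw [(hsum_d.fun_sub hg_d).deriv]
        congr 1
        refine Finset.sum_congr rfl fun k _ => ?_
        rw [hc_rec j k]
        ring
    have hfun_eq : ⇑((∑ k ∈ Finset.Icc (-(N : ℤ)) (N : ℤ),
        ((1 / (S : ℂ)) * ∫ p in (-(S / 2))..(S / 2),
            g p * Complex.exp (-(2 * (Real.pi : ℂ) * Complex.I * (k : ℂ) * (p : ℂ) / (S : ℂ)))) • e k)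
        - u) = fun p => φ p * u p := by
      funext p
      rw [SchwartzMap.sub_apply, my_schwartz_sum_apply]
      have hterm : ∀ k ∈ Finset.Icc (-(N : ℤ)) (N : ℤ),
          (((1 / (S : ℂ)) * ∫ p in (-(S / 2))..(S / 2),
            g p * Complex.exp (-(2 * (Real.pi : ℂ) * Complex.I * (k : ℂ) * (p : ℂ) / (S : ℂ)))) • e k) p
          = c 0 k * Complex.exp ((2 * (π : ℂ) * I * k / S) * p) * u p := by
        intro k _
        rw [SchwartzMap.smul_apply, hcoef k, smul_eq_mul, he k p,
          show ((2 : ℂ) * (π : ℂ) * I * (k : ℂ) / S) * (p : ℂ)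
            = 2 * (π : ℂ) * I * (k : ℂ) * (p : ℂ) / S from by ring]
        ring
      rw [Finset.sum_congr rfl hterm, ← Finset.sum_mul, hφ_def, sub_mul, ← hup p]
    apply SchwartzMap.seminorm_le_bound ℝ m n _ (mul_nonneg hCst_nonneg (hEN_nonneg N))
    intro x
    rw [hfun_eq]
    by_cases hx : x ∈ tsupport ⇑u
    · have hxI : x ∈ Set.Ioc (-(S / 2)) (-(S / 2) + S) := hK hx
      have hxb : ‖x‖ ≤ S / 2 + 1 := by
        have h := hu hx
        rw [Real.norm_eq_abs, abs_le]
        constructor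
        · linarith [h.1]
        · linarith [h.2]
      have hφ_bound : ∀ i, i ∈ Finset.range (n + 1) →
          ‖iteratedFDeriv ℝ i φ x‖ ≤ EN N := by
        intro i hi
        rw [norm_iteratedFDeriv_eq_norm_iteratedDeriv, hφ_iter i]
        refine le_trans (hpoint i N x hxI) ?_
        exact Finset.single_le_sum (f := fun j => ‖(∑ k ∈ Finset.Icc (-(N : ℤ)) (N : ℤ),
          c j k • fourier k) - CC j‖) (fun j _ => norm_nonneg _) hi
      have hu_bound : ∀ i, i ∈ Finset.range (n + 1) →
          ‖iteratedFDeriv ℝ (n - i) (⇑u) x‖ ≤ DU := by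
        intro i _
        refine le_trans (SchwartzMap.norm_iteratedFDeriv_le_seminorm ℝ u (n - i) x) ?_
        exact Finset.single_le_sum (f := fun j => SchwartzMap.seminorm ℝ 0 j u)
          (fun j _ => apply_nonneg _ _)
          (Finset.mem_range.mpr (Nat.lt_succ_of_le (Nat.sub_le n i)))
      have hmul := norm_iteratedFDeriv_mul_le (𝕜 := ℝ) hφ_smooth (u.smooth ⊤) x hinfty
      calc ‖x‖ ^ m * ‖iteratedFDeriv ℝ n (fun p => φ p * u p) x‖
          ≤ (S / 2 + 1) ^ m * ∑ i ∈ Finset.range (n + 1),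
              (n.choose i : ℝ) * ‖iteratedFDeriv ℝ i φ x‖ * ‖iteratedFDeriv ℝ (n - i) (⇑u) x‖ := by
            apply mul_le_mul (pow_le_pow_left₀ (norm_nonneg x) hxb m) hmul (norm_nonneg _)
              (by positivity)
        _ ≤ (S / 2 + 1) ^ m * ∑ i ∈ Finset.range (n + 1), (n.choose i : ℝ) * EN N * DU := by
            gcongr with i hi
            · exact hφ_bound i hi
            · exact hu_bound i hi
        _ = Cst * EN N := by
            rw [← Finset.sum_mul, ← Finset.sum_mul, ← Nat.cast_sum, Nat.sum_range_choose,
              hCst_def]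
            push_cast
            ring
    · have h0 : iteratedFDeriv ℝ n (fun p => φ p * u p) x = 0 := by
        apply image_eq_zero_of_notMem_tsupport
        intro hmem
        apply hx
        have h1 : tsupport (fun p => φ p * u p) ⊆ tsupport ⇑u :=
          closure_minimal (fun p hp => subset_closure
            (show u p ≠ 0 from fun h0 => hp (by simp [Function.mem_support, h0])))
            isClosed_closure
        exact h1 (tsupport_iteratedFDeriv_subset n hmem)
      rw [h0]
      simp only [norm_zero, mul_zero]
      exact mul_nonneg hCst_nonneg (hEN_nonneg N)
  -- conclude
  have htendsto : Tendsto (fun N => Cst * EN N) atTop (nhds 0) := by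
    simpa using hEN_tend.const_mul Cst
  have hev : ∀ᶠ N in atTop, Cst * EN N < ε := htendsto.eventually_lt_const hε
  filter_upwards [hev] with N hN
  exact lt_of_le_of_lt (key N) hN
end
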